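/- Under the setup of the divergence identity — d ∈ ℕ, y ∈ ℝ^d, r > 0, P : ℝ^d → ℝ^{d×d} continuously differentiable and diagonal, E : ℝ^d → ℝ and μ : ℝ^d → ℝ continuously differentiable with ∇μ(x) = −P(x)∇E(x) μ(x), ξ(x) = (x − y)/r, V(x) = μ(x)P(x)ξ(x) — suppose that at a point x ∈ ℝ^d: μ(x) > 0; P_{ii}(x) > 0 for every i; (∂_{x_i} P_{ii}(x))(x_i − y_i) ≥ 0 for every i; and (∂_{x_i} E(x))(x_i − y_i) ≤ 0 for every i. Then div V(x) > 0. -/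

import Mathlib

/-- Partial derivative of `f : ℝ^d → ℝ` in the `i`-th coordinate direction. -/
noncomputable def pd {d : ℕ} (i : Fin d)
    (f : EuclideanSpace ℝ (Fin d) → ℝ) (x : EuclideanSpace ℝ (Fin d)) : ℝ :=
  fderiv ℝ f x (EuclideanSpace.single i (1 : ℝ))

theorem flux_divergence_positive
    (d : ℕ) (hd : 0 < d)
    (y : EuclideanSpace ℝ (Fin d)) (r : ℝ) (hr : 0 < r)
    (P : EuclideanSpace ℝ (Fin d) → Matrix (Fin d) (Fin d) ℝ)
    (En μ : EuclideanSpace ℝ (Fin d) → ℝ)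
    (hP : ∀ i j, ContDiff ℝ 1 fun x => P x i j)
    (hdiag : ∀ x, ∀ i j, i ≠ j → P x i j = 0)
    (hE : ContDiff ℝ 1 En) (hμ : ContDiff ℝ 1 μ)
    -- condition (III): ∇μ(x) = −P(x)∇E(x) μ(x), componentwise
    (hgrad : ∀ x i, pd i μ x = -(∑ j, P x i j * pd j En x) * μ x)
    (x : EuclideanSpace ℝ (Fin d))
    (hμx : 0 < μ x)
    (hPx : ∀ i, 0 < P x i i)
    (hPsign : ∀ i, 0 ≤ pd i (fun z => P z i i) x * (x i - y i))
    (hEsign : ∀ i, pd i En x * (x i - y i) ≤ 0) :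
    -- div V(x) > 0 for V(x) = μ(x) P(x) ξ(x), ξ(x) = (x − y)/r
    0 < ∑ i, pd i (fun z => μ z * ∑ j, P z i j * ((z j - y j) / r)) x := by
  have hrne : r ≠ 0 := hr.ne'
  -- each V_i simplifies using diagonality
  have hV : ∀ i : Fin d,
      (fun z : EuclideanSpace ℝ (Fin d) => μ z * ∑ j, P z i j * ((z j - y j) / r))
      = fun z => μ z * (P z i i * ((z i - y i) / r)) := by
    intro i; funext z
    congr 1
    rw [Finset.sum_eq_single i]
    · intro j _ hj; rw [hdiag z i j (Ne.symm hj)]; ring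
    · intro h; exact absurd (Finset.mem_univ i) h
  -- compute the partial derivatives
  have key : ∀ i : Fin d,
      pd i (fun z => μ z * ∑ j, P z i j * ((z j - y j) / r)) x
      = pd i μ x * (P x i i * ((x i - y i) / r))
        + μ x * (pd i (fun z => P z i i) x * ((x i - y i) / r) + P x i i * (1 / r)) := by
    intro i
    have hg : HasFDerivAt (fun z => P z i i) (fderiv ℝ (fun z => P z i i) x) x :=
      ((hP i i).differentiable one_ne_zero x).hasFDerivAt
    have h1 : HasFDerivAt (fun z : EuclideanSpace ℝ (Fin d) => z i)
        (EuclideanSpace.proj (𝕜 := ℝ) i) x := by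
      exact (EuclideanSpace.proj (𝕜 := ℝ) i).hasFDerivAt
    have hc : HasFDerivAt (fun z : EuclideanSpace ℝ (Fin d) => (z i - y i) / r)
        (r⁻¹ • (EuclideanSpace.proj (𝕜 := ℝ) i)) x := by
      simpa [div_eq_mul_inv] using (h1.sub_const (y i)).mul_const r⁻¹
    have hgc := hg.mul hc
    have hμd : HasFDerivAt μ (fderiv ℝ μ x) x := ((hμ.differentiable one_ne_zero) x).hasFDerivAt
    have hall := hμd.mul hgc
    rw [hV i]
    unfold pd
    rw [HasFDerivAt.fderiv (f := fun z => μ z * (P z i i * ((z i - y i) / r))) hall]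
    simp [hg.fderiv]
    ring
  rw [Finset.sum_congr rfl fun i _ => key i]
  apply Finset.sum_pos _ ⟨⟨0, hd⟩, Finset.mem_univ _⟩
  intro i _
  have hμi : pd i μ x = -(P x i i * pd i En x) * μ x := by
    rw [hgrad x i]
    congr 2
    rw [Finset.sum_eq_single i]
    · intro j _ hj; rw [hdiag x i j (Ne.symm hj)]; ring
    · intro h; exact absurd (Finset.mem_univ i) h
  rw [hμi]
  have hir : (0:ℝ) < 1 / r := by positivity
  have heq : -(P x i i * pd i En x) * μ x * (P x i i * ((x i - y i) / r))
        + μ x * (pd i (fun z => P z i i) x * ((x i - y i) / r) + P x i i * (1 / r))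
      = μ x * (P x i i) ^ 2 * (1/r) * (-(pd i En x * (x i - y i)))
        + μ x * (1/r) * (pd i (fun z => P z i i) x * (x i - y i))
        + μ x * (P x i i) * (1/r) := by
    field_simp; ring
  rw [heq]
  have h1 : 0 ≤ μ x * (P x i i) ^ 2 * (1/r) * (-(pd i En x * (x i - y i))) :=
    mul_nonneg (mul_nonneg (mul_nonneg hμx.le (sq_nonneg _)) hir.le) (by linarith [hEsign i])
  have h2 : 0 ≤ μ x * (1/r) * (pd i (fun z => P z i i) x * (x i - y i)) :=
    mul_nonneg (mul_nonneg hμx.le hir.le) (hPsign i)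
  have h3 : 0 < μ x * (P x i i) * (1/r) := mul_pos (mul_pos hμx (hPx i)) hir
  linarith
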